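/- arXiv:2307.03694 — 3 statements merged into one kernel-verified Lean document; each statement's English description precedes it below -/
import Mathlib

section
/- Let α ∈ (0,1), let P be a probability distribution on ℝ with finite first moment, and let F(t) = P{s : s ≤ t} be its cumulative distribution function. Then for all real numbers a ≤ b, the difference of expected pinball losses satisfies E_{y∼P}[PB_{1−α}(b, y)] − E_{y∼P}[PB_{1−α}(a, y)] = ∫_a^b (F(t) − (1−α)) dt (the integral taken with respect to Lebesgue measure). -/
open MeasureTheory Set

/-- Pinball loss at quantile level `1 - α`. -/
noncomputable def pinball (α : ℝ) (yhat y : ℝ) : ℝ :=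
  max (α * (yhat - y)) ((1 - α) * (y - yhat))

lemma pinball_eq (α c y : ℝ) (h0 : 0 ≤ α) (h1 : α ≤ 1) :
    pinball α c y = α * (c - y) + max (y - c) 0 := by
  unfold pinball
  rcases le_total y c with h | h
  · rw [max_eq_left (by nlinarith), max_eq_right (by linarith)]; ring
  · rw [max_eq_right (by nlinarith), max_eq_left (by linarith)]; ring

/-- for a probability measure `P` on `ℝ` with finite first moment and
CDF `F`, for all `a ≤ b`, the difference of expected pinball losses is
`∫_a^b (F t - (1 - α)) dt`. -/
theorem pinball_diff_eq_integral_cdf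
    (α : ℝ) (hα : α ∈ Set.Ioo (0 : ℝ) 1)
    (P : Measure ℝ) [IsProbabilityMeasure P]
    (hmom : Integrable (fun y : ℝ => y) P)
    (a b : ℝ) (hab : a ≤ b) :
    (∫ y, pinball α b y ∂P) - (∫ y, pinball α a y ∂P)
      = ∫ t in a..b, ((P (Iic t)).toReal - (1 - α)) := by
  obtain ⟨hα0, hα1⟩ := hα
  set F : ℝ → ℝ := fun t => (P (Iic t)).toReal with hFdef
  have hFmono : Monotone F := fun s t hst =>
    ENNReal.toReal_mono (measure_ne_top _ _) (measure_mono (Iic_subset_Iic.2 hst))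
  have hFmeas : Measurable F := hFmono.measurable
  have hF01 : ∀ t, 0 ≤ F t ∧ F t ≤ 1 := fun t =>
    ⟨ENNReal.toReal_nonneg, by
      simpa using ENNReal.toReal_mono (measure_ne_top P univ) (measure_mono (subset_univ _))⟩
  have hg_int : ∀ c : ℝ, Integrable (fun y => max (y - c) 0) P := fun c =>
    (hmom.sub (integrable_const c)).pos_part
  -- Tonelli
  have swap : (∫⁻ y, ∫⁻ t in Ioc a b, (Iio y).indicator 1 t ∂volume ∂P)
      = ∫⁻ t in Ioc a b, ∫⁻ y, (Ioi t).indicator 1 y ∂P ∂volume := by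
    have hmeas : AEMeasurable
        (Function.uncurry fun (y t : ℝ) => ((Iio y).indicator 1 t : ENNReal))
        (P.prod (volume.restrict (Ioc a b))) := by
      have heq : (Function.uncurry fun (y t : ℝ) => ((Iio y).indicator 1 t : ENNReal))
          = ({p : ℝ × ℝ | p.2 < p.1}).indicator 1 := by
        ext p
        simp [Function.uncurry, Set.indicator_apply]
      rw [heq]
      exact (measurable_const.indicator
        (measurableSet_lt measurable_snd measurable_fst)).aemeasurable
    have h := lintegral_lintegral_swap hmeas
    calc (∫⁻ y, ∫⁻ t in Ioc a b, (Iio y).indicator 1 t ∂volume ∂P)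
        = ∫⁻ t in Ioc a b, ∫⁻ y, (Iio y).indicator 1 t ∂P ∂volume := h
      _ = ∫⁻ t in Ioc a b, ∫⁻ y, (Ioi t).indicator 1 y ∂P ∂volume := by
          refine lintegral_congr fun t => lintegral_congr fun y => ?_
          simp [Set.indicator_apply]
  -- left side of swap
  have left_eq : ∀ y : ℝ, (∫⁻ t in Ioc a b, (Iio y).indicator 1 t ∂volume)
      = ENNReal.ofReal (max (y - a) 0 - max (y - b) 0) := by
    intro y
    rw [lintegral_indicator_one measurableSet_Iio, Measure.restrict_apply measurableSet_Iio]
    rcases le_or_gt y a with h1 | h1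
    · have : Iio y ∩ Ioc a b = ∅ := by
        ext t; simp only [mem_inter_iff, mem_Iio, mem_Ioc, mem_empty_iff_false, iff_false]
        rintro ⟨ht, ht2, _⟩; linarith
      rw [this, measure_empty, max_eq_right (by linarith), max_eq_right (by linarith)]
      simp
    · rcases le_or_gt y b with h2 | h2
      · have : Iio y ∩ Ioc a b = Ioo a y := by
          ext t
          simp only [mem_inter_iff, mem_Iio, mem_Ioc, mem_Ioo]
          constructor
          · rintro ⟨ht, ht2, ht3⟩; exact ⟨ht2, ht⟩
          · rintro ⟨ht, ht2⟩; exact ⟨ht2, ht, by linarith⟩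
        rw [this, Real.volume_Ioo, max_eq_left (by linarith), max_eq_right (by linarith)]
        norm_num
      · have : Iio y ∩ Ioc a b = Ioc a b := by
          rw [inter_eq_right]
          intro t ht; simp only [mem_Iio]; exact lt_of_le_of_lt ht.2 h2
        rw [this, Real.volume_Ioc, max_eq_left (by linarith), max_eq_left (by linarith)]
        congr 1; ring
  -- right side of swap
  have right_eq : ∀ t : ℝ, (∫⁻ y, (Ioi t).indicator 1 y ∂P) = ENNReal.ofReal (1 - F t) := by
    intro t
    rw [lintegral_indicator_one measurableSet_Ioi]
    have hcompl : P (Iic t) + P (Ioi t) = 1 := by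
      rw [← measure_union (by simp [disjoint_left]) measurableSet_Ioi]
      simp [Iic_union_Ioi]
    have htr : F t + (P (Ioi t)).toReal = 1 := by
      rw [← ENNReal.toReal_add (measure_ne_top _ _) (measure_ne_top _ _), hcompl]
      simp
    have : (P (Ioi t)).toReal = 1 - F t := by linarith
    rw [← this, ENNReal.ofReal_toReal (measure_ne_top _ _)]
  -- define g
  set g : ℝ → ℝ := fun y => max (y - a) 0 - max (y - b) 0 with hgdef
  have hg_nonneg : ∀ y, 0 ≤ g y := by
    intro y
    have : max (y - b) 0 ≤ max (y - a) 0 := max_le_max (by linarith) le_rfl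
    simp only [hgdef]; linarith
  have hgInt : Integrable g P := (hg_int a).sub (hg_int b)
  -- the key identity
  have hIocfin : volume (Ioc a b) < ⊤ := by
    rw [Real.volume_Ioc]; exact ENNReal.ofReal_lt_top
  have hFint : IntegrableOn (fun t => 1 - F t) (Ioc a b) volume := by
    apply Integrable.mono' (integrableOn_const hIocfin.ne : IntegrableOn (fun _ => (1:ℝ)) _ _)
    · exact (measurable_const.sub hFmeas).aestronglyMeasurable
    · filter_upwards with t
      have := hF01 t
      rw [Real.norm_eq_abs, abs_le]
      constructor <;> linarith [this.1, this.2]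
  have key : (∫ y, g y ∂P) = ∫ t in Ioc a b, (1 - F t) := by
    have l1 : (∫⁻ y, ∫⁻ t in Ioc a b, (Iio y).indicator 1 t ∂volume ∂P)
        = ENNReal.ofReal (∫ y, g y ∂P) := by
      rw [ofReal_integral_eq_lintegral_ofReal hgInt (Filter.Eventually.of_forall hg_nonneg)]
      exact lintegral_congr fun y => left_eq y
    have l2 : (∫⁻ t in Ioc a b, ∫⁻ y, (Ioi t).indicator 1 y ∂P ∂volume)
        = ENNReal.ofReal (∫ t in Ioc a b, (1 - F t)) := by
      rw [ofReal_integral_eq_lintegral_ofReal hFint]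
      · exact lintegral_congr fun t => right_eq t
      · filter_upwards with t
        simp only [Pi.zero_apply]
        linarith [(hF01 t).2]
    rw [l1, l2] at swap
    have h1 : 0 ≤ ∫ y, g y ∂P := integral_nonneg hg_nonneg
    have h2 : 0 ≤ ∫ t in Ioc a b, (1 - F t) := by
      apply setIntegral_nonneg measurableSet_Ioc
      intro t _; linarith [(hF01 t).2]
    exact (ENNReal.ofReal_eq_ofReal_iff h1 h2).1 swap
  -- assemble
  have hlin : ∀ c : ℝ, Integrable (fun y => α * (c - y)) P :=
    fun c => ((integrable_const c).sub hmom).const_mul α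
  have hpin : ∀ c : ℝ, (∫ y, pinball α c y ∂P)
      = (∫ y, α * (c - y) ∂P) + ∫ y, max (y - c) 0 ∂P := by
    intro c
    rw [← integral_add (hlin c) (hg_int c)]
    congr 1; ext y
    exact pinball_eq α c y (le_of_lt hα0) (le_of_lt hα1)
  have hdiff1 : (∫ y, α * (b - y) ∂P) - (∫ y, α * (a - y) ∂P) = α * (b - a) := by
    rw [← integral_sub (hlin b) (hlin a)]
    have : (fun y => α * (b - y) - α * (a - y)) = fun _ : ℝ => α * (b - a) := by
      ext y; ring
    rw [this, integral_const]
    simp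
  have hdiff2 : (∫ y, max (y - a) 0 ∂P) - (∫ y, max (y - b) 0 ∂P) = ∫ y, g y ∂P := by
    rw [← integral_sub (hg_int a) (hg_int b)]
  have hconst : (∫ t in Ioc a b, (1 : ℝ)) = b - a := by
    simp [Real.volume_Ioc, ENNReal.toReal_ofReal (by linarith : (0:ℝ) ≤ b - a), hab]
  have hFint2 : IntegrableOn F (Ioc a b) volume := by
    have : F = (fun t => (1:ℝ)) - fun t => 1 - F t := by ext t; simp
    rw [this]
    exact (integrableOn_const hIocfin.ne).sub hFint
  have hsplit : (∫ t in Ioc a b, (1 - F t)) = (b - a) - ∫ t in Ioc a b, F t := by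
    have h := integral_sub (integrableOn_const hIocfin.ne :
      IntegrableOn (fun _ => (1:ℝ)) (Ioc a b) volume) hFint2
    simpa [hconst] using h
  rw [intervalIntegral.integral_of_le hab]
  have hrhs : (∫ t in Ioc a b, (F t - (1 - α)))
      = (∫ t in Ioc a b, F t) - (1 - α) * (b - a) := by
    have h := integral_sub hFint2 (integrableOn_const hIocfin.ne :
      IntegrableOn (fun _ => (1 - α : ℝ)) (Ioc a b) volume)
    rw [integral_const] at h
    simpa [Real.volume_Ioc, ENNReal.toReal_ofReal (by linarith : (0:ℝ) ≤ b - a),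
      mul_comm, smul_eq_mul, max_eq_left (by linarith : (0:ℝ) ≤ b - a)] using h
  rw [hpin b, hpin a, hrhs]
  linarith [hdiff1, hdiff2, hsplit, key]
end

section
/- Let X be a measurable space, α ∈ (0,1), and μ a probability measure on X × ℝ (the joint distribution of a feature x and a real-valued score s, modeling s = s(x,y) for (x,y) drawn from the null distribution D). Let H be a class of measurable functions q' : X → ℝ that is closed under additive constant shifts: for every q' ∈ H and Δ ∈ ℝ, the function x ↦ q'(x) + Δ also belongs to H. Suppose q ∈ H minimizes the expected pinball loss over H, i.e. ∫ PB_{1−α}(q(x), s) dμ(x,s) ≤ ∫ PB_{1−α}(q'(x), s) dμ(x,s) for all q' ∈ H (with these integrals finite for q and its constant shifts), and suppose the distribution of s − q(x) under μ has a continuous cumulative distribution function. Then the attack A_q rejecting exactly when s ≥ q(x) has false positive rate α: μ{(x,s) : s ≥ q(x)} = α. -/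
open MeasureTheory Set

lemma pinball_eq_s6 {α : ℝ} (hα0 : 0 < α) (hα1 : α < 1) (a b : ℝ) :
    pinball α a b = α * (a - b) + max (b - a) 0 := by
  unfold pinball
  rcases le_total b a with h | h
  · rw [max_eq_left (by nlinarith), max_eq_right (by linarith)]; ring
  · rw [max_eq_right (by nlinarith), max_eq_left (by linarith)]; ring

lemma pinball_diff {α : ℝ} (hα0 : 0 < α) (hα1 : α < 1) (c Δ y : ℝ) :
    pinball α (c + Δ) y - pinball α c y
      = α * Δ + max (y - c - Δ) 0 - max (y - c) 0 := by
  rw [pinball_eq_s6 hα0 hα1, pinball_eq_s6 hα0 hα1]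
  have : y - (c + Δ) = y - c - Δ := by ring
  rw [this]; ring

lemma max_sub_le (Δ t : ℝ) :
    max (t - Δ) 0 - max t 0 ≤ if Δ < t then -Δ else 0 := by
  rcases le_total (t - Δ) 0 with h1 | h1 <;> rcases le_total t 0 with h2 | h2 <;>
    split_ifs with h3 <;>
    simp [max_eq_left, max_eq_right, h1, h2] <;> linarith

/-- Theorem 1 of the paper: if `q` minimizes expected pinball loss at
level `1-α` over a class `H` of measurable threshold functions closed under additive
constant shifts, the integrals are finite for `q` and its constant shifts, and the
distribution of `s - q(x)` has a continuous CDF, then the attack rejecting exactly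
when `s ≥ q(x)` has false positive rate `α`. -/
theorem quantile_regression_attack_fpr
    {X : Type*} [MeasurableSpace X]
    (α : ℝ) (hα : α ∈ Set.Ioo (0 : ℝ) 1)
    (μ : Measure (X × ℝ)) [IsProbabilityMeasure μ]
    (H : Set (X → ℝ))
    (hHmeas : ∀ q' ∈ H, Measurable q')
    (hHshift : ∀ q' ∈ H, ∀ Δ : ℝ, (fun x => q' x + Δ) ∈ H)
    (q : X → ℝ) (hq : q ∈ H)
    (hint : ∀ Δ : ℝ, Integrable (fun p : X × ℝ => pinball α (q p.1 + Δ) p.2) μ)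
    (hmin : ∀ q' ∈ H, ∫ p : X × ℝ, pinball α (q p.1) p.2 ∂μ
      ≤ ∫ p : X × ℝ, pinball α (q' p.1) p.2 ∂μ)
    (hcont : Continuous fun t : ℝ => (μ {p : X × ℝ | p.2 - q p.1 ≤ t}).toReal) :
    (μ {p : X × ℝ | q p.1 ≤ p.2}).toReal = α := by
  obtain ⟨hα0, hα1⟩ := hα
  have hqm : Measurable q := hHmeas q hq
  have ht : Measurable fun p : X × ℝ => p.2 - q p.1 :=
    measurable_snd.sub (hqm.comp measurable_fst)
  set F : ℝ → ℝ := fun u => (μ {p : X × ℝ | p.2 - q p.1 ≤ u}).toReal with hFdef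
  -- splitting into complements
  have hsplit : ∀ u : ℝ, F u + (μ {p : X × ℝ | u < p.2 - q p.1}).toReal = 1 := by
    intro u
    have hm : MeasurableSet {p : X × ℝ | p.2 - q p.1 ≤ u} :=
      measurableSet_le ht measurable_const
    have hc : {p : X × ℝ | u < p.2 - q p.1} = {p : X × ℝ | p.2 - q p.1 ≤ u}ᶜ := by
      ext p; simp only [Set.mem_setOf_eq, Set.mem_compl_iff, not_le]
    rw [hc, hFdef]
    have h2 : μ {p : X × ℝ | p.2 - q p.1 ≤ u} + μ {p : X × ℝ | p.2 - q p.1 ≤ u}ᶜ = 1 := by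
      rw [measure_add_measure_compl hm, measure_univ]
    have := congrArg ENNReal.toReal h2
    rwa [ENNReal.toReal_add (measure_ne_top μ _) (measure_ne_top μ _),
      ENNReal.toReal_one] at this
  -- master inequality from minimality over shifts
  have key : ∀ Δ : ℝ, (μ {p : X × ℝ | Δ < p.2 - q p.1}).toReal * Δ ≤ α * Δ := by
    intro Δ
    set S := {p : X × ℝ | Δ < p.2 - q p.1} with hSdef
    have hSm : MeasurableSet S := measurableSet_lt measurable_const ht
    have hint0 : Integrable (fun p : X × ℝ => pinball α (q p.1) p.2) μ := by
      simpa using hint 0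
    have hintΔ := hint Δ
    have hnn : 0 ≤ ∫ p : X × ℝ,
        (pinball α (q p.1 + Δ) p.2 - pinball α (q p.1) p.2) ∂μ := by
      rw [integral_sub hintΔ hint0, sub_nonneg]
      exact hmin (fun x => q x + Δ) (hHshift q hq Δ)
    have hgint : Integrable
        (fun p : X × ℝ => α * Δ - S.indicator (fun _ => Δ) p) μ :=
      (integrable_const _).sub ((integrable_const Δ).indicator hSm)
    have hle : ∀ p : X × ℝ, pinball α (q p.1 + Δ) p.2 - pinball α (q p.1) p.2
        ≤ α * Δ - S.indicator (fun _ => Δ) p := by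
      intro p
      rw [pinball_diff hα0 hα1]
      have h := max_sub_le Δ (p.2 - q p.1)
      by_cases hp : Δ < p.2 - q p.1
      · rw [Set.indicator_of_mem (show p ∈ S from hp)]
        rw [if_pos hp] at h
        linarith
      · rw [Set.indicator_of_notMem (show p ∉ S from hp)]
        rw [if_neg hp] at h
        linarith
    have hmono := integral_mono (hintΔ.sub hint0) hgint hle
    rw [integral_sub (integrable_const _) ((integrable_const Δ).indicator hSm),
      integral_const, integral_indicator_const Δ hSm] at hmono
    simp only [measureReal_def, measure_univ, ENNReal.toReal_one, one_smul, smul_eq_mul,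
      Pi.sub_apply] at hmono
    linarith
  have hFge : ∀ Δ : ℝ, 0 < Δ → 1 - α ≤ F Δ := by
    intro Δ hΔ
    have h1 := key Δ
    have h2 : (μ {p : X × ℝ | Δ < p.2 - q p.1}).toReal ≤ α :=
      le_of_mul_le_mul_right h1 hΔ
    have h3 := hsplit Δ
    linarith
  have hFle : ∀ Δ : ℝ, Δ < 0 → F Δ ≤ 1 - α := by
    intro Δ hΔ
    have h1 := key Δ
    have h2 : α ≤ (μ {p : X × ℝ | Δ < p.2 - q p.1}).toReal := by
      nlinarith
    have h3 := hsplit Δ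
    linarith
  have hF0 : F 0 = 1 - α := by
    have h1 : Filter.Tendsto F (nhdsWithin 0 (Set.Ioi 0)) (nhds (F 0)) :=
      (hcont.tendsto 0).mono_left nhdsWithin_le_nhds
    have h2 : Filter.Tendsto F (nhdsWithin 0 (Set.Iio 0)) (nhds (F 0)) :=
      (hcont.tendsto 0).mono_left nhdsWithin_le_nhds
    have hge : 1 - α ≤ F 0 :=
      ge_of_tendsto h1 (eventually_nhdsWithin_of_forall fun x hx => hFge x hx)
    have hle' : F 0 ≤ 1 - α :=
      le_of_tendsto h2 (eventually_nhdsWithin_of_forall fun x hx => hFle x hx)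
    linarith
  -- the measure of {s - q x < 0}
  have hA : (μ {p : X × ℝ | p.2 - q p.1 < 0}).toReal = 1 - α := by
    have hub : (μ {p : X × ℝ | p.2 - q p.1 < 0}).toReal ≤ F 0 :=
      ENNReal.toReal_mono (measure_ne_top μ _)
        (measure_mono fun p (hp : p.2 - q p.1 < 0) => le_of_lt hp)
    have hlb : ∀ δ : ℝ, δ < 0 → F δ ≤ (μ {p : X × ℝ | p.2 - q p.1 < 0}).toReal := by
      intro δ hδ
      exact ENNReal.toReal_mono (measure_ne_top μ _)
        (measure_mono fun p (hp : p.2 - q p.1 ≤ δ) => lt_of_le_of_lt hp hδ)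
    have h2 : Filter.Tendsto F (nhdsWithin 0 (Set.Iio 0)) (nhds (F 0)) :=
      (hcont.tendsto 0).mono_left nhdsWithin_le_nhds
    have : F 0 ≤ (μ {p : X × ℝ | p.2 - q p.1 < 0}).toReal :=
      le_of_tendsto h2 (eventually_nhdsWithin_of_forall fun x hx => hlb x hx)
    linarith
  -- conclude
  have hm : MeasurableSet {p : X × ℝ | p.2 - q p.1 < 0} :=
    measurableSet_lt ht measurable_const
  have hset : {p : X × ℝ | q p.1 ≤ p.2} = {p : X × ℝ | p.2 - q p.1 < 0}ᶜ := by
    ext p; simp [not_lt, sub_nonneg]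
  have h2 : μ {p : X × ℝ | p.2 - q p.1 < 0} + μ {p : X × ℝ | p.2 - q p.1 < 0}ᶜ = 1 := by
    rw [measure_add_measure_compl hm, measure_univ]
  have h3 := congrArg ENNReal.toReal h2
  rw [ENNReal.toReal_add (measure_ne_top μ _) (measure_ne_top μ _),
    ENNReal.toReal_one, hA] at h3
  rw [hset]
  linarith
end

section
/- Let X be a measurable space, α ∈ (0,1), and μ a probability measure on X × ℝ (the joint distribution of a feature x and a real-valued score s under the null distribution D). Let G be a collection of measurable group indicator functions g : X → {0,1}, each with μ{(x,s) : g(x) = 1} > 0, and let H be a class of measurable functions q' : X → ℝ closed under shifts from G: for every q' ∈ H, g ∈ G, and η ∈ ℝ, the function x ↦ q'(x) + η·g(x) also belongs to H. Suppose q ∈ H minimizes the expected pinball loss over H, i.e. ∫ PB_{1−α}(q(x), s) dμ(x,s) ≤ ∫ PB_{1−α}(q'(x), s) dμ(x,s) for all q' ∈ H (with these integrals finite for q and all its G-shifts), and suppose that for every g ∈ G, the distribution of s − q(x) under μ conditioned on the event {g(x) = 1} has a continuous cumulative distribution function. Then the attack A_q rejecting exactly when s ≥ q(x) has false positive rate α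 conditional on membership in each group: for every g ∈ G, μ({(x,s) : s ≥ q(x)} | {(x,s) : g(x) = 1}) = α. -/
open MeasureTheory Set ProbabilityTheory
lemma pinball_shift_le_pos (α η c s : ℝ) (hη : 0 < η) :
    pinball α (c + η) s - pinball α c s ≤ η * α - (if η < s - c then η else 0) := by
  unfold pinball
  split_ifs with h <;>
  · rcases max_cases (α * (c + η - s)) ((1 - α) * (s - (c + η))) with ⟨h1', h2'⟩ | ⟨h1', h2'⟩ <;>
      rcases max_cases (α * (c - s)) ((1 - α) * (s - c)) with ⟨h3', h4'⟩ | ⟨h3', h4'⟩ <;>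
      nlinarith

lemma pinball_shift_le_neg (α η c s : ℝ) (hη : η < 0) :
    pinball α (c + η) s - pinball α c s ≤ (-η) * (1 - α) - (if s - c ≤ η then -η else 0) := by
  unfold pinball
  split_ifs with h <;>
  · rcases max_cases (α * (c + η - s)) ((1 - α) * (s - (c + η))) with ⟨h1', h2'⟩ | ⟨h1', h2'⟩ <;>
      rcases max_cases (α * (c - s)) ((1 - α) * (s - c)) with ⟨h3', h4'⟩ | ⟨h3', h4'⟩ <;>
      nlinarith

/-- Theorem 2 of the paper, group conditional quantile consistency:
if `q` minimizes expected pinball loss at level `1-α` over a class `H` of measurable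
threshold functions closed under shifts by the group indicators in `G`, and the
conditional distribution of `s - q(x)` on each group has a continuous CDF, then the
attack rejecting exactly when `s ≥ q(x)` has false positive rate `α` conditional on
each group `g ∈ G`. -/
theorem quantile_regression_attack_group_conditional_fpr
    {X : Type*} [MeasurableSpace X]
    (α : ℝ) (hα : α ∈ Set.Ioo (0 : ℝ) 1)
    (μ : Measure (X × ℝ)) [IsProbabilityMeasure μ]
    (G : Set (X → ℝ))
    (hGind : ∀ g ∈ G, ∀ x : X, g x = 0 ∨ g x = 1)
    (hGmeas : ∀ g ∈ G, Measurable g)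
    (hGpos : ∀ g ∈ G, 0 < μ {p : X × ℝ | g p.1 = 1})
    (H : Set (X → ℝ))
    (hHmeas : ∀ q' ∈ H, Measurable q')
    (hHshift : ∀ q' ∈ H, ∀ g ∈ G, ∀ η : ℝ, (fun x => q' x + η * g x) ∈ H)
    (q : X → ℝ) (hq : q ∈ H)
    (hint : ∀ g ∈ G, ∀ η : ℝ,
      Integrable (fun p : X × ℝ => pinball α (q p.1 + η * g p.1) p.2) μ)
    (hintq : Integrable (fun p : X × ℝ => pinball α (q p.1) p.2) μ)
    (hmin : ∀ q' ∈ H, ∫ p : X × ℝ, pinball α (q p.1) p.2 ∂μ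
      ≤ ∫ p : X × ℝ, pinball α (q' p.1) p.2 ∂μ)
    (hcont : ∀ g ∈ G, Continuous fun t : ℝ =>
      ((μ[|{p : X × ℝ | g p.1 = 1}]) {p : X × ℝ | p.2 - q p.1 ≤ t}).toReal) :
    ∀ g ∈ G, ((μ[|{p : X × ℝ | g p.1 = 1}]) {p : X × ℝ | q p.1 ≤ p.2}).toReal = α := by
  classical
  obtain ⟨hα0, hα1⟩ := hα
  intro g hg
  set A : Set (X × ℝ) := {p : X × ℝ | g p.1 = 1} with hAdef
  have hA : MeasurableSet A :=
    measurableSet_eq_fun ((hGmeas g hg).comp measurable_fst) measurable_const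
  have hT : Measurable (fun p : X × ℝ => p.2 - q p.1) :=
    measurable_snd.sub ((hHmeas q hq).comp measurable_fst)
  have hμA0 : μ A ≠ 0 := (hGpos g hg).ne'
  have hμAfin : μ A ≠ ⊤ := measure_ne_top μ A
  haveI : IsProbabilityMeasure (μ[|A]) := cond_isProbabilityMeasure hμA0
  have hmApos : 0 < (μ A).toReal := ENNReal.toReal_pos hμA0 hμAfin
  -- the key variational step
  have step : ∀ (η κ c : ℝ) (B : Set (X × ℝ)), MeasurableSet B →
      (∀ p : X × ℝ, p ∈ A →
        pinball α (q p.1 + η) p.2 - pinball α (q p.1) p.2 ≤ c - (if p ∈ B then κ else 0)) →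
      κ * (μ (A ∩ B)).toReal ≤ c * (μ A).toReal := by
    intro η κ c B hB hbd
    set d : X × ℝ → ℝ := fun p => pinball α (q p.1 + η * g p.1) p.2 - pinball α (q p.1) p.2
      with hddef
    set u : X × ℝ → ℝ := fun p =>
      A.indicator (fun _ => c) p - (A ∩ B).indicator (fun _ => κ) p with hudef
    have hd_int : Integrable d μ := (hint g hg η).sub hintq
    have hu_int : Integrable u μ :=
      ((integrable_const c).indicator hA).sub ((integrable_const κ).indicator (hA.inter hB))
    have hle : ∀ p, d p ≤ u p := by
      intro p
      rcases hGind g hg p.1 with h | h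
      · have hpA : p ∉ A := by simp [hAdef, h]
        have hpAB : p ∉ A ∩ B := fun hc => hpA hc.1
        simp [hddef, hudef, h, indicator_of_notMem, hpA, hpAB]
      · have hpA : p ∈ A := h
        have hAB : p ∈ A ∩ B ↔ p ∈ B := ⟨fun hc => hc.2, fun hc => ⟨hpA, hc⟩⟩
        have := hbd p hpA
        simp only [hddef, hudef, h, mul_one, indicator_of_mem hpA]
        by_cases hB' : p ∈ B
        · rw [indicator_of_mem (hAB.2 hB')]
          simpa [hB'] using this
        · rw [indicator_of_notMem (fun hc => hB' (hAB.1 hc))]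
          simpa [hB'] using this
    have h0 : 0 ≤ ∫ p, d p ∂μ := by
      rw [hddef]
      rw [integral_sub (hint g hg η) hintq]
      exact sub_nonneg.2 (hmin _ (hHshift q hq g hg η))
    have h1 : ∫ p, d p ∂μ ≤ ∫ p, u p ∂μ := integral_mono hd_int hu_int hle
    have h2 : ∫ p, u p ∂μ = c * (μ A).toReal - κ * (μ (A ∩ B)).toReal := by
      rw [hudef]
      rw [integral_sub ((integrable_const c).indicator hA)
        ((integrable_const κ).indicator (hA.inter hB)),
        integral_indicator_const _ hA, integral_indicator_const _ (hA.inter hB)]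
      simp [mul_comm]
      rfl
    linarith
  have pos : ∀ δ : ℝ, 0 < δ →
      (μ (A ∩ {p : X × ℝ | δ < p.2 - q p.1})).toReal ≤ α * (μ A).toReal := by
    intro δ hδ
    have hB : MeasurableSet {p : X × ℝ | δ < p.2 - q p.1} :=
      measurableSet_lt measurable_const hT
    have key := step δ δ (δ * α) _ hB (fun p _ => by
      have h2 := pinball_shift_le_pos α δ (q p.1) p.2 hδ
      simp only [Set.mem_setOf_eq]
      split_ifs at h2 ⊢ <;> linarith)
    rw [mul_assoc] at key
    exact le_of_mul_le_mul_left key hδ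
  have neg : ∀ δ : ℝ, 0 < δ →
      (μ (A ∩ {p : X × ℝ | p.2 - q p.1 ≤ -δ})).toReal ≤ (1 - α) * (μ A).toReal := by
    intro δ hδ
    have hB : MeasurableSet {p : X × ℝ | p.2 - q p.1 ≤ -δ} :=
      measurableSet_le hT measurable_const
    have key := step (-δ) δ (δ * (1 - α)) _ hB (fun p _ => by
      have h2 := pinball_shift_le_neg α (-δ) (q p.1) p.2 (by linarith)
      rw [neg_neg] at h2
      simp only [Set.mem_setOf_eq]
      split_ifs at h2 ⊢ <;> linarith)
    rw [mul_assoc] at key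
    exact le_of_mul_le_mul_left key hδ
  set F : ℝ → ℝ := fun t => ((μ[|A]) {p : X × ℝ | p.2 - q p.1 ≤ t}).toReal with hF
  have hFc : Continuous F := hcont g hg
  have hFval : ∀ t, F t = (μ (A ∩ {p : X × ℝ | p.2 - q p.1 ≤ t})).toReal / (μ A).toReal := by
    intro t
    rw [hF]
    simp only
    rw [cond_apply hA, ENNReal.toReal_mul, ENNReal.toReal_inv, inv_mul_eq_div]
  have hsplit : ∀ t, (μ (A ∩ {p : X × ℝ | p.2 - q p.1 ≤ t})).toReal
      = (μ A).toReal - (μ (A ∩ {p : X × ℝ | t < p.2 - q p.1})).toReal := by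
    intro t
    have hB : MeasurableSet {p : X × ℝ | p.2 - q p.1 ≤ t} :=
      measurableSet_le hT measurable_const
    have h := measure_inter_add_diff (μ := μ) A hB
    have hds : A \ {p : X × ℝ | p.2 - q p.1 ≤ t} = A ∩ {p : X × ℝ | t < p.2 - q p.1} := by
      ext p
      simp only [Set.mem_diff, Set.mem_inter_iff, Set.mem_setOf_eq, not_le]
    rw [hds] at h
    have h' := congrArg ENNReal.toReal h
    rw [ENNReal.toReal_add (measure_ne_top _ _) (measure_ne_top _ _)] at h'
    linarith
  have hFge : ∀ δ : ℝ, 0 < δ → 1 - α ≤ F δ := by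
    intro δ hδ
    rw [hFval, hsplit, le_div_iff₀ hmApos]
    nlinarith [pos δ hδ]
  have hFle : ∀ δ : ℝ, 0 < δ → F (-δ) ≤ 1 - α := by
    intro δ hδ
    rw [hFval, div_le_iff₀ hmApos]
    nlinarith [neg δ hδ]
  have hseq : Filter.Tendsto (fun n : ℕ => (1 : ℝ)/(n+1)) Filter.atTop (nhds 0) :=
    tendsto_one_div_add_atTop_nhds_zero_nat
  have hseqn : Filter.Tendsto (fun n : ℕ => -((1 : ℝ)/(n+1))) Filter.atTop (nhds 0) := by
    have := hseq.neg
    rwa [neg_zero] at this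
  have htpos : Filter.Tendsto (fun n : ℕ => F (1/(n+1))) Filter.atTop (nhds (F 0)) :=
    (hFc.tendsto 0).comp hseq
  have htneg : Filter.Tendsto (fun n : ℕ => F (-(1/(n+1)))) Filter.atTop (nhds (F 0)) :=
    (hFc.tendsto 0).comp hseqn
  have hn : ∀ n : ℕ, (0:ℝ) < 1/(n+1) := fun n => by positivity
  have hF0 : F 0 = 1 - α := by
    apply le_antisymm
    · exact le_of_tendsto htneg (Filter.Eventually.of_forall fun n => hFle _ (hn n))
    · exact ge_of_tendsto htpos (Filter.Eventually.of_forall fun n => hFge _ (hn n))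
  set S : Set (X × ℝ) := {p : X × ℝ | p.2 - q p.1 < 0} with hS
  have hSm : MeasurableSet S := measurableSet_lt hT measurable_const
  have hνS : ((μ[|A]) S).toReal = 1 - α := by
    apply le_antisymm
    · have hsub : S ⊆ {p : X × ℝ | p.2 - q p.1 ≤ 0} := by
        intro p hp
        simp only [hS, Set.mem_setOf_eq] at hp
        exact le_of_lt hp
      calc ((μ[|A]) S).toReal ≤ F 0 :=
            ENNReal.toReal_mono (measure_ne_top _ _) (measure_mono hsub)
        _ = 1 - α := hF0
    · rw [← hF0]
      refine le_of_tendsto htneg (Filter.Eventually.of_forall fun n => ?_)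
      have hsub : {p : X × ℝ | p.2 - q p.1 ≤ -(1/(n+1))} ⊆ S := fun p hp => by
        have := hn n
        simp only [hS, Set.mem_setOf_eq] at *
        linarith
      exact ENNReal.toReal_mono (measure_ne_top _ _) (measure_mono hsub)
  have hcompl : {p : X × ℝ | q p.1 ≤ p.2} = Sᶜ := by
    ext p
    simp [hS, not_lt, sub_nonneg]
  rw [hcompl, prob_compl_eq_one_sub hSm,
    ENNReal.toReal_sub_of_le prob_le_one ENNReal.one_ne_top]
  rw [hνS]
  simp
end
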